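/- Let R be a base matrix with D-component Δ, s ∈ F((z^{-1}))^m, A = ⌊R^{-1}s⌋, α = {R^{-1}s}, ε ∈ F[z]^m, and a = A - ε. Then the following are equivalent: (1) Iv(Δα) ≤ Iv(Δε); (2) α = ε = 0 or Iv(Δα) < Iv(Δε); (3) Iv(-R·a + s) = Iv(Δα); (4) Iv(-R·a + s) > v(Δ). -/

import Mathlib

open Polynomial HahnSeries

noncomputable section

variable {F : Type*} [Field F] {m : ℕ}

/-- `z = X⁻¹` viewed in `F((z⁻¹)) = F((X))`. -/
def zed (F : Type*) [Field F] : LaurentSeries F := HahnSeries.single (-1 : ℤ) 1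

/-- Embedding of `F[z]` into `F((z⁻¹))`. -/
def Zpoly (p : Polynomial F) : LaurentSeries F := Polynomial.aeval (zed F) p

/-- Componentwise polynomial part `⌊·⌋` (terms with nonnegative powers of `z`). -/
def polyPart (f : LaurentSeries F) : LaurentSeries F where
  coeff n := if n ≤ 0 then f.coeff n else 0
  isPWO_support' := f.isPWO_support'.mono (fun n hn => by
    simp only [Function.mem_support, ne_eq] at hn ⊢
    by_cases h : n ≤ 0
    · simpa [h] using hn
    · simp [h] at hn)

/-- Fractional part `{·}` (strictly negative powers of `z`). -/
def fracPart (f : LaurentSeries F) : LaurentSeries F := f - polyPart f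

/-- Valuation with values in `WithTop ℤ`. -/
def vW (f : LaurentSeries F) : WithTop ℤ := open Classical in if f = 0 then ⊤ else (f.order : WithTop ℤ)

/-- Valuation of a vector: the minimum of component valuations. -/
def vV (r : Fin m → LaurentSeries F) : WithTop ℤ := Finset.univ.inf fun i => vW (r i)

/-- Indexed valuation of one component paired with its index. -/
def ivc (f : LaurentSeries F) (i : Fin m) : WithTop (Lex (ℤ × Fin m)) :=
  open Classical in if f = 0 then ⊤ else ↑(toLex (f.order, i))

/-- The indexed valuation `Iv` on `F((z⁻¹))^m`, with `Iv 0 = ⊤`. -/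
def Iv (r : Fin m → LaurentSeries F) : WithTop (Lex (ℤ × Fin m)) :=
  Finset.univ.inf fun i => ivc (r i) i


/-- `R` is a base matrix with column valuations `c`: each column `j` is nonzero,
has index `j`, and valuation `c j` (so its `D`-component is `Diag(z^{-c_1},…,z^{-c_m})`). -/
def IsBaseMatrix (R : Matrix (Fin m) (Fin m) (LaurentSeries F)) (c : Fin m → ℤ) : Prop :=
  ∀ j : Fin m, Iv (fun i => R i j) = ↑(toLex (c j, j))

/-- Multiplication by the `D`-matrix `Δ = Diag(z^{-c_1},…,z^{-c_m})`
(note `z^{-c} = X^c` in `F((X)) = F((z⁻¹))`). -/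
def Dmul (c : Fin m → ℤ) (r : Fin m → LaurentSeries F) : Fin m → LaurentSeries F :=
  fun j => HahnSeries.single (c j) 1 * r j

/-- `x > v(Δ)`: writing `x = (h,w)` one has `w > c h`; by convention `⊤ > v(Δ)`. -/
def gtVal (x : WithTop (Lex (ℤ × Fin m))) (c : Fin m → ℤ) : Prop :=
  ∀ (w : ℤ) (h : Fin m), x = ↑(toLex (w, h)) → c h < w

/-- `x ≤ v(Δ)`: writing `x = (h,w)` one has `w ≤ c h`. -/
def leVal (x : WithTop (Lex (ℤ × Fin m))) (c : Fin m → ℤ) : Prop :=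
  ∃ (w : ℤ) (h : Fin m), x = ↑(toLex (w, h)) ∧ w ≤ c h

section Aux

variable {F : Type*} [Field F] {m : ℕ}

/-! ### Lex order helpers -/

lemma lexle_same {a b : ℤ} (i : Fin m) (h : a ≤ b) :
    (toLex (a, i) : Lex (ℤ × Fin m)) ≤ toLex (b, i) := by
  rw [Prod.Lex.le_iff]
  rcases lt_or_eq_of_le h with h | h
  · exact Or.inl h
  · exact Or.inr ⟨h, le_refl i⟩

lemma lexle_add (k : ℤ) {a b : ℤ} {i j : Fin m}
    (h : (toLex (a, i) : Lex (ℤ × Fin m)) ≤ toLex (b, j)) :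
    (toLex (a + k, i) : Lex (ℤ × Fin m)) ≤ toLex (b + k, j) := by
  rw [Prod.Lex.le_iff] at h ⊢
  rcases h with h | ⟨h1, h2⟩
  · exact Or.inl (by simpa using h)
  · have h1' : a = b := h1
    exact Or.inr ⟨by simp [h1'], h2⟩

lemma coeLex_inj {w w' : ℤ} {i i' : Fin m}
    (h : (↑(toLex (w, i)) : WithTop (Lex (ℤ × Fin m))) = ↑(toLex (w', i'))) :
    w = w' ∧ i = i' :=
  Prod.ext_iff.mp (toLex_inj.mp (WithTop.coe_inj.mp h))

/-! ### ivc and Iv basics -/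

lemma ivc_zero (i : Fin m) : ivc (0 : LaurentSeries F) i = ⊤ := by
  rw [ivc, if_pos rfl]

lemma ivc_of_ne {f : LaurentSeries F} (h : f ≠ 0) (i : Fin m) :
    ivc f i = ↑(toLex (f.order, i)) := by
  rw [ivc, if_neg h]

lemma ivc_eq_top {f : LaurentSeries F} {i : Fin m} (h : ivc f i = ⊤) : f = 0 := by
  by_contra hf
  rw [ivc_of_ne hf] at h
  exact WithTop.coe_ne_top h

lemma Iv_le (r : Fin m → LaurentSeries F) (i : Fin m) : Iv r ≤ ivc (r i) i :=
  Finset.inf_le (Finset.mem_univ i)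

lemma Iv_zero : Iv (0 : Fin m → LaurentSeries F) = ⊤ := by
  rw [Iv]
  refine (Finset.inf_eq_top_iff _ _).mpr fun i _ => ?_
  exact ivc_zero i

lemma Iv_eq_top_iff {r : Fin m → LaurentSeries F} : Iv r = ⊤ ↔ r = 0 := by
  constructor
  · intro h
    funext i
    exact ivc_eq_top (top_unique (h ▸ Iv_le r i))
  · intro h; rw [h]; exact Iv_zero

lemma Iv_exists {r : Fin m → LaurentSeries F} (h : Iv r ≠ ⊤) :
    ∃ i, r i ≠ 0 ∧ Iv r = ↑(toLex ((r i).order, i)) := by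
  have hne : (Finset.univ : Finset (Fin m)).Nonempty := by
    rcases Finset.eq_empty_or_nonempty (Finset.univ : Finset (Fin m)) with he | hne
    · exact absurd (by rw [Iv, he, Finset.inf_empty]) h
    · exact hne
  obtain ⟨i, _, hi⟩ := Finset.exists_mem_eq_inf Finset.univ hne (fun i => ivc (r i) i)
  have hi : Iv r = ivc (r i) i := hi
  have hri : r i ≠ 0 := fun h0 => h (by rw [hi, h0, ivc_zero])
  exact ⟨i, hri, hi.trans (ivc_of_ne hri i)⟩

/-! ### Iv and addition -/

lemma min_ivc_le_add (f g : LaurentSeries F) (i : Fin m) :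
    min (ivc f i) (ivc g i) ≤ ivc (f + g) i := by
  by_cases hf : f = 0
  · rw [hf, zero_add, ivc_zero]
    exact min_le_of_right_le le_rfl
  by_cases hg : g = 0
  · rw [hg, add_zero, ivc_zero]
    exact min_le_of_left_le le_rfl
  by_cases hfg : f + g = 0
  · rw [hfg, ivc_zero]; exact le_top
  have horder := HahnSeries.min_order_le_order_add hfg
  rcases le_total f.order g.order with h | h
  · rw [min_eq_left h] at horder
    refine min_le_of_left_le ?_
    rw [ivc_of_ne hf, ivc_of_ne hfg]
    exact WithTop.coe_le_coe.mpr (lexle_same i horder)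
  · rw [min_eq_right h] at horder
    refine min_le_of_right_le ?_
    rw [ivc_of_ne hg, ivc_of_ne hfg]
    exact WithTop.coe_le_coe.mpr (lexle_same i horder)

lemma min_Iv_le_add (u v : Fin m → LaurentSeries F) :
    min (Iv u) (Iv v) ≤ Iv (u + v) := by
  refine Finset.le_inf fun i _ => ?_
  calc min (Iv u) (Iv v) ≤ min (ivc (u i) i) (ivc (v i) i) :=
        min_le_min (Iv_le u i) (Iv_le v i)
    _ ≤ ivc ((u + v) i) i := by rw [Pi.add_apply]; exact min_ivc_le_add _ _ i

lemma Iv_add_eq_left {u v : Fin m → LaurentSeries F} (h : Iv u < Iv v) :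
    Iv (u + v) = Iv u := by
  obtain ⟨i, hu, hi⟩ := Iv_exists (ne_top_of_lt h)
  have hvord : v i = 0 ∨ (u i).order < (v i).order := by
    by_cases hv : v i = 0
    · exact Or.inl hv
    right
    have h2 : (↑(toLex ((u i).order, i)) : WithTop (Lex (ℤ × Fin m)))
        < ↑(toLex ((v i).order, i)) := by
      rw [← hi, ← ivc_of_ne hv]
      exact lt_of_lt_of_le h (Iv_le v i)
    rw [WithTop.coe_lt_coe, Prod.Lex.lt_iff] at h2
    rcases h2 with h2 | ⟨_, h2⟩
    · exact h2
    · exact absurd h2 (lt_irrefl i)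
  have hord : u i + v i ≠ 0 ∧ (u i + v i).order = (u i).order := by
    rcases hvord with hv | hv
    · rw [hv, add_zero]; exact ⟨hu, rfl⟩
    · have hcoeff : (u i + v i).coeff (u i).order ≠ 0 := by
        rw [HahnSeries.coeff_add, HahnSeries.coeff_eq_zero_of_lt_order hv, add_zero]
        exact fun h0 => hu (HahnSeries.coeff_order_eq_zero.mp h0)
      have hne : u i + v i ≠ 0 := fun h0 => hcoeff (by rw [h0, HahnSeries.coeff_zero])
      refine ⟨hne, le_antisymm (HahnSeries.order_le_of_coeff_ne_zero hcoeff) ?_⟩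
      calc (u i).order = min (u i).order (v i).order := (min_eq_left hv.le).symm
        _ ≤ (u i + v i).order := HahnSeries.min_order_le_order_add hne
  apply le_antisymm
  · calc Iv (u + v) ≤ ivc ((u + v) i) i := Iv_le _ i
      _ = ↑(toLex ((u i).order, i)) := by
          rw [Pi.add_apply, ivc_of_ne hord.1, hord.2]
      _ = Iv u := hi.symm
  · calc Iv u = min (Iv u) (Iv v) := (min_eq_left h.le).symm
      _ ≤ Iv (u + v) := min_Iv_le_add u v

lemma inf_Iv_le_sum {ι : Type*} [DecidableEq ι] (s : Finset ι)
    (t : ι → Fin m → LaurentSeries F) :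
    s.inf (fun j => Iv (t j)) ≤ Iv (∑ j ∈ s, t j) := by
  induction s using Finset.induction_on with
  | empty => rw [Finset.sum_empty, Iv_zero]; exact le_top
  | @insert a s ha ih =>
    rw [Finset.sum_insert ha, Finset.inf_insert]
    calc Iv (t a) ⊓ s.inf (fun j => Iv (t j)) ≤ Iv (t a) ⊓ Iv (∑ j ∈ s, t j) :=
          inf_le_inf_left _ ih
      _ ≤ Iv (t a + ∑ j ∈ s, t j) := min_Iv_le_add _ _

lemma Iv_sum_eq {ι : Type*} [DecidableEq ι] {s : Finset ι}
    (t : ι → Fin m → LaurentSeries F) {h : ι} (hh : h ∈ s)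
    (hmin : ∀ j ∈ s, j ≠ h → Iv (t h) < Iv (t j)) :
    Iv (∑ j ∈ s, t j) = Iv (t h) := by
  rw [← Finset.add_sum_erase s t hh]
  by_cases htop : Iv (t h) = ⊤
  · have hz : ∀ j ∈ s.erase h, t j = (0 : Fin m → LaurentSeries F) := fun j hj => by
      have := hmin j (Finset.mem_of_mem_erase hj) (Finset.ne_of_mem_erase hj)
      rw [htop] at this
      exact absurd this not_top_lt
    rw [Finset.sum_eq_zero hz, add_zero]
  · have hlt : Iv (t h) < Iv (∑ j ∈ s.erase h, t j) := by
      refine lt_of_lt_of_le ?_ (inf_Iv_le_sum _ t)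
      rw [Finset.lt_inf_iff (lt_top_iff_ne_top.mpr htop)]
      exact fun j hj => hmin j (Finset.mem_of_mem_erase hj) (Finset.ne_of_mem_erase hj)
    exact Iv_add_eq_left hlt

/-! ### Zpoly and fracPart -/

lemma Zpoly_coeff (p : Polynomial F) (n : ℕ) :
    (Zpoly p).coeff (-(n : ℤ)) = p.coeff n := by
  have hterm : ∀ (e : ℕ) (a : F),
      algebraMap F (LaurentSeries F) a * zed F ^ e = HahnSeries.single (-(e : ℤ)) a := by
    intro e a
    rw [HahnSeries.algebraMap_apply', ← PowerSeries.C_eq_algebraMap, HahnSeries.ofPowerSeries_C,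
      HahnSeries.C_apply, zed, HahnSeries.single_pow, HahnSeries.single_mul_single]
    simp
  rw [Zpoly, Polynomial.aeval_def, Polynomial.eval₂_eq_sum, Polynomial.sum_def]
  simp_rw [hterm]
  have hsum : (∑ e ∈ p.support, (HahnSeries.single (-(e : ℤ)) (p.coeff e) : LaurentSeries F)).coeff
      (-(n : ℤ)) = ∑ e ∈ p.support,
        (HahnSeries.single (-(e : ℤ)) (p.coeff e) : LaurentSeries F).coeff (-(n : ℤ)) :=
    map_sum (HahnSeries.coeff.addMonoidHom (-(n : ℤ))) _ p.support
  rw [hsum]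
  simp only [HahnSeries.coeff_single, neg_inj, Nat.cast_inj]
  rw [Finset.sum_ite_eq p.support n (fun e => p.coeff e)]
  split_ifs with hmem
  · rfl
  · exact (Polynomial.notMem_support_iff.mp hmem).symm

lemma Zpoly_ne_zero {p : Polynomial F} (hp : p ≠ 0) : Zpoly p ≠ 0 := by
  intro h
  have h2 := Zpoly_coeff p p.natDegree
  rw [h, HahnSeries.coeff_zero] at h2
  exact Polynomial.leadingCoeff_ne_zero.mpr hp h2.symm

lemma Zpoly_order_le {p : Polynomial F} (hp : p ≠ 0) : (Zpoly p).order ≤ 0 := by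
  refine le_trans (HahnSeries.order_le_of_coeff_ne_zero ?_) (by omega : -(p.natDegree : ℤ) ≤ 0)
  rw [Zpoly_coeff p p.natDegree]
  exact Polynomial.leadingCoeff_ne_zero.mpr hp

lemma fracPart_coeff (f : LaurentSeries F) (n : ℤ) :
    (fracPart f).coeff n = if n ≤ 0 then 0 else f.coeff n := by
  rw [fracPart, HahnSeries.coeff_sub]
  show f.coeff n - (if n ≤ 0 then f.coeff n else 0) = _
  split_ifs <;> simp

lemma fracPart_order_pos {f : LaurentSeries F} (h : fracPart f ≠ 0) :
    0 < (fracPart f).order := by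
  by_contra hle
  push_neg at hle
  exact (fun h0 => h (HahnSeries.coeff_order_eq_zero.mp h0)) (by rw [fracPart_coeff]; exact if_pos hle)

/-! ### Dmul -/

lemma Dmul_apply (c : Fin m → ℤ) (r : Fin m → LaurentSeries F) (j : Fin m) :
    Dmul c r j = HahnSeries.single (c j) 1 * r j := rfl

lemma Dmul_apply_eq_zero_iff {c : Fin m → ℤ} {r : Fin m → LaurentSeries F} {j : Fin m} :
    Dmul c r j = 0 ↔ r j = 0 := by
  rw [Dmul_apply, mul_eq_zero]
  simp [HahnSeries.single_ne_zero (one_ne_zero : (1 : F) ≠ 0)]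

lemma Dmul_order {c : Fin m → ℤ} {r : Fin m → LaurentSeries F} {j : Fin m} (h : r j ≠ 0) :
    (Dmul c r j).order = c j + (r j).order := by
  rw [Dmul_apply, HahnSeries.order_mul (HahnSeries.single_ne_zero one_ne_zero) h,
    HahnSeries.order_single one_ne_zero]

lemma Dmul_eq_zero_iff {c : Fin m → ℤ} {r : Fin m → LaurentSeries F} :
    Dmul c r = 0 ↔ r = 0 := by
  constructor
  · intro h; funext j
    exact Dmul_apply_eq_zero_iff.mp (congrFun h j)
  · intro h; funext j
    rw [Dmul_apply, h]
    simp

lemma Dmul_add (c : Fin m → ℤ) (u v : Fin m → LaurentSeries F) :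
    Dmul c (u + v) = Dmul c u + Dmul c v := by
  funext j
  rw [Pi.add_apply, Dmul_apply, Dmul_apply, Dmul_apply, Pi.add_apply, mul_add]

/-! ### Base matrices -/

lemma baseMatrix_diag {R : Matrix (Fin m) (Fin m) (LaurentSeries F)} {c : Fin m → ℤ}
    (hR : IsBaseMatrix R c) (j : Fin m) :
    R j j ≠ 0 ∧ (R j j).order = c j ∧
      ∀ i, (↑(toLex (c j, j)) : WithTop (Lex (ℤ × Fin m))) ≤ ivc (R i j) i := by
  have h := hR j
  have hne : Iv (fun i => R i j) ≠ ⊤ := by rw [h]; exact WithTop.coe_ne_top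
  obtain ⟨i, hri, hi⟩ := Iv_exists hne
  rw [h] at hi
  obtain ⟨h1, h2⟩ := coeLex_inj hi
  subst h2
  exact ⟨hri, h1.symm, fun i' => h ▸ Iv_le (fun i => R i j) i'⟩

lemma Iv_smul_col {R : Matrix (Fin m) (Fin m) (LaurentSeries F)} {c : Fin m → ℤ}
    (hR : IsBaseMatrix R c) (j : Fin m) {x : LaurentSeries F} (hx : x ≠ 0) :
    Iv (fun i => R i j * x) = ↑(toLex (c j + x.order, j)) := by
  obtain ⟨hjj, hord, hle⟩ := baseMatrix_diag hR j
  apply le_antisymm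
  · calc Iv (fun i => R i j * x) ≤ ivc (R j j * x) j := Iv_le _ j
      _ = ↑(toLex (c j + x.order, j)) := by
          rw [ivc_of_ne (mul_ne_zero hjj hx), HahnSeries.order_mul hjj hx, hord]
  · refine Finset.le_inf fun i _ => ?_
    show (↑(toLex (c j + x.order, j)) : WithTop (Lex (ℤ × Fin m))) ≤ ivc (R i j * x) i
    by_cases hri : R i j = 0
    · rw [hri, zero_mul, ivc_zero]; exact le_top
    · rw [ivc_of_ne (mul_ne_zero hri hx), HahnSeries.order_mul hri hx]
      have h3 := hle i
      rw [ivc_of_ne hri] at h3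
      exact WithTop.coe_le_coe.mpr (lexle_add x.order (WithTop.coe_le_coe.mp h3))

lemma Iv_mulVec {R : Matrix (Fin m) (Fin m) (LaurentSeries F)} {c : Fin m → ℤ}
    (hR : IsBaseMatrix R c) (x : Fin m → LaurentSeries F) :
    Iv (R.mulVec x) = Iv (Dmul c x) := by
  classical
  have hsum : R.mulVec x = ∑ j, (fun i => R i j * x j) := by
    funext i
    rw [Finset.sum_apply]
    simp [Matrix.mulVec, dotProduct]
  by_cases hx : x = 0
  · subst hx
    rw [Matrix.mulVec_zero, Dmul_eq_zero_iff.mpr rfl]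
  · have hDne : Iv (Dmul c x) ≠ ⊤ := fun h => hx (Dmul_eq_zero_iff.mp (Iv_eq_top_iff.mp h))
    obtain ⟨h, hDh, hIvD⟩ := Iv_exists hDne
    have hxh : x h ≠ 0 := fun h0 => hDh (Dmul_apply_eq_zero_iff.mpr h0)
    have hth : Iv (fun i => R i h * x h) = Iv (Dmul c x) := by
      rw [Iv_smul_col hR h hxh, hIvD, Dmul_order hxh]
    have hmin : ∀ j ∈ Finset.univ, j ≠ h →
        Iv (fun i => R i h * x h) < Iv (fun i => R i j * x j) := by
      intro j _ hj
      by_cases hxj : x j = 0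
      · have : (fun i => R i j * x j) = (0 : Fin m → LaurentSeries F) := by
          funext i; rw [hxj, mul_zero]; rfl
        rw [this, Iv_zero]
        exact lt_top_iff_ne_top.mpr (hth ▸ hDne)
      · have hIj : Iv (fun i => R i j * x j) = ↑(toLex (c j + (x j).order, j)) :=
          Iv_smul_col hR j hxj
        have hDj : Dmul c x j ≠ 0 := fun h0 => hxj (Dmul_apply_eq_zero_iff.mp h0)
        have hle : Iv (fun i => R i h * x h) ≤ Iv (fun i => R i j * x j) := by
          rw [hth, hIj, ← Dmul_order hxj, ← ivc_of_ne hDj]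
          exact Iv_le (Dmul c x) j
        rcases lt_or_eq_of_le hle with h1 | h1
        · exact h1
        · exfalso
          rw [hth, hIvD, hIj] at h1
          exact hj ((coeLex_inj h1).2).symm
    rw [hsum, Iv_sum_eq _ (Finset.mem_univ h) hmin, hth]

lemma baseMatrix_isUnit_det {R : Matrix (Fin m) (Fin m) (LaurentSeries F)} {c : Fin m → ℤ}
    (hR : IsBaseMatrix R c) : IsUnit R.det := by
  rw [← Matrix.isUnit_iff_isUnit_det, ← Matrix.mulVec_injective_iff_isUnit]
  intro u v huv
  have h0 : R.mulVec (u - v) = 0 := by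
    rw [Matrix.mulVec_sub, huv, sub_self]
  have h1 := Iv_mulVec hR (u - v)
  rw [h0, Iv_zero] at h1
  have h2 : u - v = 0 := Dmul_eq_zero_iff.mp (Iv_eq_top_iff.mp h1.symm)
  exact sub_eq_zero.mp h2

end Aux


/-- Lemma 7.5: for a base matrix `R` with `D`-component `Δ`, `A = ⌊R⁻¹s⌋`,
`α = {R⁻¹s}`, `ε ∈ F[z]^m`, `a = A - ε`, the following are equivalent:
(1) `Iv(Δα) ≤ Iv(Δε)`; (2) `α = ε = 0` or `Iv(Δα) < Iv(Δε)`;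
(3) `Iv(-R·a + s) = Iv(Δα)`; (4) `Iv(-R·a + s) > v(Δ)`. -/
theorem stmt18 (F : Type*) [Field F] (m : ℕ)
    (R : Matrix (Fin m) (Fin m) (LaurentSeries F)) (c : Fin m → ℤ)
    (hR : IsBaseMatrix R c) (s : Fin m → LaurentSeries F)
    (ε : Fin m → Polynomial F) (A α a : Fin m → LaurentSeries F)
    (hA : ∀ i, A i = polyPart (R⁻¹.mulVec s i))
    (hα : ∀ i, α i = fracPart (R⁻¹.mulVec s i))
    (ha : ∀ i, a i = A i - Zpoly (ε i)) :
    ((Iv (Dmul c α) ≤ Iv (Dmul c fun i => Zpoly (ε i))) ↔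
      ((α = 0 ∧ ε = 0) ∨ Iv (Dmul c α) < Iv (Dmul c fun i => Zpoly (ε i)))) ∧
    ((Iv (Dmul c α) ≤ Iv (Dmul c fun i => Zpoly (ε i))) ↔
      Iv (fun i => -(R.mulVec a) i + s i) = Iv (Dmul c α)) ∧
    ((Iv (Dmul c α) ≤ Iv (Dmul c fun i => Zpoly (ε i))) ↔
      gtVal (Iv (fun i => -(R.mulVec a) i + s i)) c) := by
  classical
  have hαfrac : ∀ i, α i ≠ 0 → 0 < (α i).order := by
    intro i hi
    rw [hα i] at hi ⊢
    exact fracPart_order_pos hi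
  -- `Iv (Δα)` is always `> v(Δ)`
  have gtP : ∀ (w : ℤ) (h0 : Fin m), Iv (Dmul c α) = ↑(toLex (w, h0)) → c h0 < w := by
    intro w h0 heq
    have hPt : Iv (Dmul c α) ≠ ⊤ := by rw [heq]; exact WithTop.coe_ne_top
    obtain ⟨i, hne, hi⟩ := Iv_exists hPt
    rw [heq] at hi
    obtain ⟨h1, h2⟩ := coeLex_inj hi
    subst h2
    have hαi : α h0 ≠ 0 := fun h3 => hne (Dmul_apply_eq_zero_iff.mpr h3)
    rw [Dmul_order hαi] at h1
    have := hαfrac h0 hαi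
    omega
  -- `Iv (Δε)`, when not ⊤, is `≤ v(Δ)`
  have leQ : Iv (Dmul c fun i => Zpoly (ε i)) ≠ ⊤ →
      ∃ (w : ℤ) (h0 : Fin m), Iv (Dmul c fun i => Zpoly (ε i)) = ↑(toLex (w, h0)) ∧ w ≤ c h0 := by
    intro hQt
    obtain ⟨i, hne, hi⟩ := Iv_exists hQt
    have hεi : Zpoly (ε i) ≠ 0 := fun h3 => hne (Dmul_apply_eq_zero_iff.mpr h3)
    have hεpi : ε i ≠ 0 := by
      intro h3
      apply hεi
      rw [h3, Zpoly, map_zero]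
    refine ⟨((Dmul c fun i => Zpoly (ε i)) i).order, i, hi, ?_⟩
    rw [Dmul_order (show (fun i => Zpoly (ε i)) i ≠ 0 from hεi)]
    have : (Zpoly (ε i)).order ≤ 0 := Zpoly_order_le hεpi
    omega
  have hPQtop : Iv (Dmul c α) = Iv (Dmul c fun i => Zpoly (ε i)) → Iv (Dmul c α) = ⊤ := by
    intro hpq
    by_contra hPt
    obtain ⟨i, hne, hi⟩ := Iv_exists hPt
    have hQt : Iv (Dmul c fun i => Zpoly (ε i)) ≠ ⊤ := by rw [← hpq]; exact hPt
    obtain ⟨w, h0, hqe, hwle⟩ := leQ hQt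
    have h1 : (↑(toLex ((Dmul c α i).order, i)) : WithTop (Lex (ℤ × Fin m)))
        = ↑(toLex (w, h0)) := by rw [← hi, hpq, hqe]
    obtain ⟨h2, h3⟩ := coeLex_inj h1
    have := gtP w h0 (by rw [hi, h2, h3])
    omega
  -- the key identity: `-R·a + s = R·(α + ε)`
  have hdet := baseMatrix_isUnit_det hR
  have hRinv : R.mulVec (R⁻¹.mulVec s) = s := by
    rw [Matrix.mulVec_mulVec, Matrix.mul_nonsing_inv _ hdet, Matrix.one_mulVec]
  have hβ : (α + fun i => Zpoly (ε i)) = R⁻¹.mulVec s - a := by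
    funext i
    rw [Pi.add_apply, Pi.sub_apply, ha i, hα i, hA i, fracPart]
    ring
  have hvec : (fun i => -(R.mulVec a) i + s i) = R.mulVec (α + fun i => Zpoly (ε i)) := by
    rw [hβ, Matrix.mulVec_sub, hRinv]
    funext i
    rw [Pi.sub_apply]
    ring
  have hL : Iv (fun i => -(R.mulVec a) i + s i)
      = min (Iv (Dmul c α)) (Iv (Dmul c fun i => Zpoly (ε i))) := by
    rw [hvec, Iv_mulVec hR, Dmul_add]
    rcases lt_trichotomy (Iv (Dmul c α)) (Iv (Dmul c fun i => Zpoly (ε i))) with h | h | h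
    · rw [min_eq_left h.le]
      exact Iv_add_eq_left h
    · have hPt := hPQtop h
      have hQt : Iv (Dmul c fun i => Zpoly (ε i)) = ⊤ := h ▸ hPt
      have hα0 : Dmul c α = 0 := Iv_eq_top_iff.mp hPt
      have hε0 : Dmul c (fun i => Zpoly (ε i)) = 0 := Iv_eq_top_iff.mp hQt
      rw [hα0, hε0, add_zero, Iv_zero]
      exact (min_self ⊤).symm
    · rw [min_eq_right h.le, add_comm]
      exact Iv_add_eq_left h
  have hPtop_iff : Iv (Dmul c α) = ⊤ ↔ α = 0 := by
    rw [Iv_eq_top_iff, Dmul_eq_zero_iff]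
  have hQtop_iff : Iv (Dmul c fun i => Zpoly (ε i)) = ⊤ ↔ ε = 0 := by
    rw [Iv_eq_top_iff, Dmul_eq_zero_iff]
    constructor
    · intro h3
      funext i
      by_contra hne
      exact Zpoly_ne_zero hne (congrFun h3 i)
    · intro h3
      funext i
      show Zpoly (ε i) = 0
      rw [h3]
      show Zpoly ((0 : Fin m → Polynomial F) i) = 0
      rw [Pi.zero_apply, Zpoly, map_zero]
  refine ⟨?_, ?_, ?_⟩
  · constructor
    · intro h1
      rcases eq_or_lt_of_le h1 with he | hlt
      · have hPt := hPQtop he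
        exact Or.inl ⟨hPtop_iff.mp hPt, hQtop_iff.mp (he ▸ hPt)⟩
      · exact Or.inr hlt
    · rintro (⟨hα0, hε0⟩ | hlt)
      · rw [hPtop_iff.mpr hα0, hQtop_iff.mpr hε0]
      · exact hlt.le
  · rw [hL]
    exact ⟨fun h1 => min_eq_left h1, fun h1 => min_eq_left_iff.mp h1⟩
  · rw [hL]
    constructor
    · intro h1
      rw [min_eq_left h1]
      exact gtP
    · intro h1
      by_contra hle
      push_neg at hle
      obtain ⟨w, h0, hqe, hwle⟩ := leQ (ne_top_of_lt hle)
      have := h1 w h0 (by rw [min_eq_right hle.le, hqe])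
      omega

end
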